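/- Let (X,d) be a finite pseudometric space and let {A₀,B₀} be a partial d-split of X. Then the sum of the isolation indices α^d_{{A,B}}, taken over all d-splits {A,B} of X extending {A₀,B₀} (i.e. splits with A₀ ⊆ A and B₀ ⊆ B and positive isolation index), is at most α^d_{{A₀,B₀}}. -/

import Mathlib

open Set Function

noncomputable section

variable {X : Type*}

/-- `d` is a pseudometric on `X`. -/
def IsPseudometric (d : X → X → ℝ) : Prop :=
  (∀ x, d x x = 0) ∧ (∀ x y, d x y = d y x) ∧ ∀ x y z, d x z ≤ d x y + d y z

/-- `d` is a metric on `X`. -/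
def IsMetric (d : X → X → ℝ) : Prop :=
  IsPseudometric d ∧ ∀ x y, d x y = 0 → x = y

/-- `d` is integer-valued. -/
def IsIntegerValued (d : X → X → ℝ) : Prop := ∀ x y, ∃ n : ℤ, d x y = (n : ℝ)

/-- The quantity `β^d` associated to the four points `a, a', b, b'`. -/
def betaIdx (d : X → X → ℝ) (a a' b b' : X) : ℝ :=
  (max (max (d a b + d a' b') (d a' b + d a b')) (d a a' + d b b') - d a a' - d b b') / 2

/-- The isolation index `α^d_{{A,B}}` of the pair `{A,B}`. -/
def isolIdx (d : X → X → ℝ) (A B : Set X) : ℝ :=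
  sInf {r : ℝ | ∃ a ∈ A, ∃ a' ∈ A, ∃ b ∈ B, ∃ b' ∈ B, r = betaIdx d a a' b b'}

/-- `{A, B}` is a partial split of `X`. -/
def IsPartialSplit (A B : Set X) : Prop := A.Nonempty ∧ B.Nonempty ∧ Disjoint A B

/-- `{A, B}` is a split of `X`. -/
def IsSplit (A B : Set X) : Prop := IsPartialSplit A B ∧ A ∪ B = univ

/-- `{A, B}` is a `d`-split of `X`. -/
def IsDSplit (d : X → X → ℝ) (A B : Set X) : Prop := IsSplit A B ∧ 0 < isolIdx d A B

open Classical in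
/-- The split pseudometric `δ_S` of the split `{A, Aᶜ}`. -/
def splitDist (A : Set X) (x y : X) : ℝ := if x ∈ A ↔ y ∈ A then 0 else 1


-- ------------------------------------------------------------------
-- Auxiliary lemmas
-- ------------------------------------------------------------------

lemma betaIdx_nonneg (d : X → X → ℝ) (a a' b b' : X) : 0 ≤ betaIdx d a a' b b' := by
  have := le_max_right (max (d a b + d a' b') (d a' b + d a b')) (d a a' + d b b')
  unfold betaIdx
  linarith

lemma isolIdx_set_finite [Finite X] (d : X → X → ℝ) (A B : Set X) :
    {r : ℝ | ∃ a ∈ A, ∃ a' ∈ A, ∃ b ∈ B, ∃ b' ∈ B, r = betaIdx d a a' b b'}.Finite := by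
  have h : {r : ℝ | ∃ a ∈ A, ∃ a' ∈ A, ∃ b ∈ B, ∃ b' ∈ B, r = betaIdx d a a' b b'} ⊆
      Set.range (fun p : X × X × X × X => betaIdx d p.1 p.2.1 p.2.2.1 p.2.2.2) := by
    rintro r ⟨a, _, a', _, b, _, b', _, rfl⟩
    exact ⟨(a, a', b, b'), rfl⟩
  exact (Set.finite_range _).subset h

lemma isolIdx_le [Finite X] (d : X → X → ℝ) {A B : Set X} {a a' b b' : X}
    (ha : a ∈ A) (ha' : a' ∈ A) (hb : b ∈ B) (hb' : b' ∈ B) :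
    isolIdx d A B ≤ betaIdx d a a' b b' :=
  csInf_le (isolIdx_set_finite d A B).bddBelow ⟨a, ha, a', ha', b, hb, b', hb', rfl⟩

lemma le_isolIdx (d : X → X → ℝ) {A B : Set X} {m : ℝ} (hA : A.Nonempty) (hB : B.Nonempty)
    (h : ∀ a ∈ A, ∀ a' ∈ A, ∀ b ∈ B, ∀ b' ∈ B, m ≤ betaIdx d a a' b b') :
    m ≤ isolIdx d A B := by
  obtain ⟨a, ha⟩ := hA
  obtain ⟨b, hb⟩ := hB
  refine le_csInf ⟨betaIdx d a a b b, a, ha, a, ha, b, hb, b, hb, rfl⟩ ?_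
  rintro r ⟨a, ha, a', ha', b, hb, b', hb', rfl⟩
  exact h a ha a' ha' b hb b' hb'

lemma isolIdx_nonneg (d : X → X → ℝ) {A B : Set X} (hA : A.Nonempty) (hB : B.Nonempty) :
    0 ≤ isolIdx d A B :=
  le_isolIdx d hA hB fun a _ a' _ b _ b' _ => betaIdx_nonneg d a a' b b'

lemma exists_isolIdx_eq [Finite X] (d : X → X → ℝ) {A B : Set X}
    (hA : A.Nonempty) (hB : B.Nonempty) :
    ∃ a ∈ A, ∃ a' ∈ A, ∃ b ∈ B, ∃ b' ∈ B, isolIdx d A B = betaIdx d a a' b b' := by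
  obtain ⟨a, ha⟩ := hA
  obtain ⟨b, hb⟩ := hB
  have hne : {r : ℝ | ∃ a ∈ A, ∃ a' ∈ A, ∃ b ∈ B, ∃ b' ∈ B, r = betaIdx d a a' b b'}.Nonempty :=
    ⟨betaIdx d a a b b, a, ha, a, ha, b, hb, b, hb, rfl⟩
  exact hne.csInf_mem (isolIdx_set_finite d A B)

lemma betaIdx_swap {e : X → X → ℝ} (hsym : ∀ x y, e x y = e y x) (a a' b b' : X) :
    betaIdx e b b' a a' = betaIdx e a a' b b' := by
  unfold betaIdx
  rw [hsym b a, hsym b' a', hsym b' a, hsym b a', add_comm (e a b') (e a' b),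
    add_comm (e b b') (e a a')]
  ring_nf

lemma isolIdx_comm {e : X → X → ℝ} (hsym : ∀ x y, e x y = e y x) (A B : Set X) :
    isolIdx e A B = isolIdx e B A := by
  unfold isolIdx
  congr 1
  ext r
  constructor
  · rintro ⟨a, ha, a', ha', b, hb, b', hb', rfl⟩
    exact ⟨b, hb, b', hb', a, ha, a', ha', (betaIdx_swap hsym a a' b b').symm⟩
  · rintro ⟨b, hb, b', hb', a, ha, a', ha', rfl⟩
    exact ⟨a, ha, a', ha', b, hb, b', hb', (betaIdx_swap hsym b b' a a').symm⟩

private lemma K_aux (U V p q r : ℝ) (hr : 0 < r)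
    (h : r ≤ (max (max U V) (p + q) - p - q) / 2) :
    2 * r + p + q ≤ max U V := by
  rcases max_cases (max U V) (p + q) with ⟨hm, _⟩ | ⟨hm, hle⟩
  · rw [hm] at h; linarith
  · rw [hm] at h; linarith

set_option maxHeartbeats 2000000 in
lemma key5 {e : X → X → ℝ} (he : IsPseudometric e) {s t : ℝ} (a a' b b' x : X)
    (hs1 : s ≤ betaIdx e a a' b x) (hs2 : s ≤ betaIdx e a a' b' x)
    (ht1 : t ≤ betaIdx e a x b b') (ht2 : t ≤ betaIdx e a' x b b')
    (hst1 : s ≤ betaIdx e a a' b b') (hst2 : t ≤ betaIdx e a a' b b') :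
    s + t ≤ betaIdx e a a' b b' := by
  obtain ⟨h0, hsym, htri⟩ := he
  rcases le_or_gt s 0 with hs0 | hs0
  · linarith
  rcases le_or_gt t 0 with ht0 | ht0
  · linarith
  simp only [betaIdx] at hs1 hs2 ht1 ht2 hst1 hst2 ⊢
  have Hs1 := K_aux _ _ _ _ _ hs0 hs1
  have Hs2 := K_aux _ _ _ _ _ hs0 hs2
  have Ht1 := K_aux _ _ _ _ _ ht0 ht1
  have Ht2 := K_aux _ _ _ _ _ ht0 ht2
  have Hst1 := K_aux _ _ _ _ _ hs0 hst1
  have Hst2 := K_aux _ _ _ _ _ ht0 hst2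
  suffices H : 2 * s + 2 * t + e a a' + e b b' ≤ max (e a b + e a' b') (e a' b + e a b') by
    have h2 := le_max_left (max (e a b + e a' b') (e a' b + e a b')) (e a a' + e b b')
    linarith
  rcases max_cases (e a b + e a' b') (e a' b + e a b') with ⟨hg, hg2⟩ | ⟨hg, hg2⟩ <;>
    rw [hg] at Hst1 Hst2 ⊢ <;>
  rcases max_cases (e a b + e a' x) (e a' b + e a x) with ⟨hm1, hm1'⟩ | ⟨hm1, hm1'⟩ <;>
    rw [hm1] at Hs1 <;>
  rcases max_cases (e a b' + e a' x) (e a' b' + e a x) with ⟨hm2, hm2'⟩ | ⟨hm2, hm2'⟩ <;>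
    rw [hm2] at Hs2 <;>
  rcases max_cases (e a b + e x b') (e x b + e a b') with ⟨hm3, hm3'⟩ | ⟨hm3, hm3'⟩ <;>
    rw [hm3] at Ht1 <;>
  rcases max_cases (e a' b + e x b') (e x b + e a' b') with ⟨hm4, hm4'⟩ | ⟨hm4, hm4'⟩ <;>
    rw [hm4] at Ht2 <;>
  linarith [htri a x b, htri a x b', htri a' x b, htri a' x b', htri a a' x, htri a x a',
    htri b b' x, htri b x b', htri a x x, hsym x b, hsym x b', hsym a x, hsym a' x,
    htri a b x, htri a b' x, htri a' b x, htri a' b' x, htri x a b, htri x a b',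
    htri x a' b, htri x a' b', htri a a' b, htri a a' b', htri b a b', htri b a' b',
    hsym a b, hsym a' b, hsym a b', hsym a' b', hsym a a', hsym b b']

lemma splitDist_nonneg (A : Set X) (x y : X) : 0 ≤ splitDist A x y := by
  unfold splitDist; split_ifs <;> norm_num

lemma betaIdx_pair {e : X → X → ℝ} (h0 : ∀ x, e x x = 0) (hsym : ∀ x y, e x y = e y x)
    (htri : ∀ x y z, e x z ≤ e x y + e y z) (u u' v : X) :
    betaIdx e u u' v v = (e u v + e u' v - e u u') / 2 := by
  have hle : e u u' ≤ e u v + e u' v := by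
    have := htri u v u'; rw [hsym v u'] at this; linarith
  unfold betaIdx
  rw [h0 v, add_zero, sub_zero, add_comm (e u' v) (e u v), max_self, max_eq_left hle]

lemma betaIdx_pair' {e : X → X → ℝ} (h0 : ∀ x, e x x = 0) (hsym : ∀ x y, e x y = e y x)
    (htri : ∀ x y z, e x z ≤ e x y + e y z) (u v v' : X) :
    betaIdx e u u v v' = (e u v + e u v' - e v v') / 2 := by
  have hle : e v v' ≤ e u v + e u v' := by
    have := htri v u v'; rw [hsym v u] at this; linarith
  unfold betaIdx
  rw [h0 u, zero_add, sub_zero, max_self, max_eq_left hle]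

/-- Subtracting a multiple of a split metric (below the isolation index)
keeps the pseudometric property. -/
lemma pseudo_sub [Finite X] {e : X → X → ℝ} (he : IsPseudometric e) {A : Set X} {c : ℝ}
    (hc : c ≤ isolIdx e A Aᶜ) :
    IsPseudometric (fun x y => e x y - c * splitDist A x y) := by
  obtain ⟨h0, hsym, htri⟩ := he
  have cross : ∀ u u' v : X, u ∈ A → u' ∈ A → v ∉ A → 2 * c ≤ e u v + e u' v - e u u' := by
    intro u u' v hu hu' hv
    have h1 : c ≤ betaIdx e u u' v v := le_trans hc (isolIdx_le e hu hu' hv hv)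
    rw [betaIdx_pair h0 hsym htri] at h1; linarith
  have cross' : ∀ u u' v : X, u ∉ A → u' ∉ A → v ∈ A → 2 * c ≤ e u v + e u' v - e u u' := by
    intro u u' v hu hu' hv
    have h1 : c ≤ betaIdx e v v u u' := le_trans hc (isolIdx_le e hv hv hu hu')
    rw [betaIdx_pair' h0 hsym htri] at h1
    have := hsym v u; have := hsym v u'
    linarith
  refine ⟨fun x => by simp [splitDist, h0], fun x y => ?_, fun x y z => ?_⟩
  · by_cases hx : x ∈ A <;> by_cases hy : y ∈ A <;> simp [splitDist, hx, hy, hsym x y]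
  · by_cases hx : x ∈ A <;> by_cases hy : y ∈ A <;> by_cases hz : z ∈ A <;>
      simp [splitDist, hx, hy, hz] <;>
      first
        | linarith [htri x y z]
        | linarith [cross x z y hx hz hy, hsym z y]
        | linarith [cross' x z y hx hz hy, hsym z y]

private lemma helper_gen {T1 T2 p q T1' T2' p' q' : ℝ}
    (h1 : T1 - p - q ≤ T1' - p' - q') (h2 : T2 - p - q ≤ T2' - p' - q')
    (h3 : p' + q' ≤ p + q) :
    (max (max T1 T2) (p + q) - p - q) / 2 ≤ (max (max T1' T2') (p' + q') - p' - q') / 2 := by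
  have b1 : T1' ≤ max (max T1' T2') (p' + q') :=
    le_trans (le_max_left _ _) (le_max_left _ _)
  have b2 : T2' ≤ max (max T1' T2') (p' + q') :=
    le_trans (le_max_right _ _) (le_max_left _ _)
  have b3 := le_max_right (max T1' T2') (p' + q')
  have : max (max T1 T2) (p + q) ≤ max (max T1' T2') (p' + q') - p' - q' + p + q :=
    max_le (max_le (by linarith) (by linarith)) (by linarith)
  linarith

private lemma helper_sep_ge {x1 x2 x3 x4 x5 x6 c : ℝ} (hc : 0 ≤ c) :
    (max (max (x1 + x2) (x3 + x4)) (x5 + x6) - x5 - x6) / 2 - c ≤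
      (max (max (x1 - c + (x2 - c)) (x3 - c + (x4 - c))) (x5 + x6) - x5 - x6) / 2 := by
  have b1 : x1 - c + (x2 - c) ≤ max (max (x1 - c + (x2 - c)) (x3 - c + (x4 - c))) (x5 + x6) :=
    le_trans (le_max_left _ _) (le_max_left _ _)
  have b2 : x3 - c + (x4 - c) ≤ max (max (x1 - c + (x2 - c)) (x3 - c + (x4 - c))) (x5 + x6) :=
    le_trans (le_max_right _ _) (le_max_left _ _)
  have b3 := le_max_right (max (x1 - c + (x2 - c)) (x3 - c + (x4 - c))) (x5 + x6)
  have : max (max (x1 + x2) (x3 + x4)) (x5 + x6) ≤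
      max (max (x1 - c + (x2 - c)) (x3 - c + (x4 - c))) (x5 + x6) + 2 * c :=
    max_le (max_le (by linarith) (by linarith)) (by linarith)
  linarith

private lemma helper_sep_le {x1 x2 x3 x4 x5 x6 c : ℝ}
    (hb : c ≤ (max (max (x1 + x2) (x3 + x4)) (x5 + x6) - x5 - x6) / 2) :
    (max (max (x1 - c + (x2 - c)) (x3 - c + (x4 - c))) (x5 + x6) - x5 - x6) / 2 ≤
      (max (max (x1 + x2) (x3 + x4)) (x5 + x6) - x5 - x6) / 2 - c := by
  have b1 : x1 + x2 ≤ max (max (x1 + x2) (x3 + x4)) (x5 + x6) :=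
    le_trans (le_max_left _ _) (le_max_left _ _)
  have b2 : x3 + x4 ≤ max (max (x1 + x2) (x3 + x4)) (x5 + x6) :=
    le_trans (le_max_right _ _) (le_max_left _ _)
  have : max (max (x1 - c + (x2 - c)) (x3 - c + (x4 - c))) (x5 + x6) ≤
      max (max (x1 + x2) (x3 + x4)) (x5 + x6) - 2 * c :=
    max_le (max_le (by linarith) (by linarith)) (by linarith)
  linarith

lemma beta_sep_ge {e : X → X → ℝ} {A : Set X} {c : ℝ} (hc : 0 ≤ c) {a a' b b' : X}
    (ha : a ∈ A) (ha' : a' ∈ A) (hb : b ∉ A) (hb' : b' ∉ A) :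
    betaIdx e a a' b b' - c ≤ betaIdx (fun x y => e x y - c * splitDist A x y) a a' b b' := by
  have E1 : e a b - c * splitDist A a b = e a b - c := by simp [splitDist, ha, hb]
  have E2 : e a' b' - c * splitDist A a' b' = e a' b' - c := by simp [splitDist, ha', hb']
  have E3 : e a' b - c * splitDist A a' b = e a' b - c := by simp [splitDist, ha', hb]
  have E4 : e a b' - c * splitDist A a b' = e a b' - c := by simp [splitDist, ha, hb']
  have E5 : e a a' - c * splitDist A a a' = e a a' := by simp [splitDist, ha, ha']
  have E6 : e b b' - c * splitDist A b b' = e b b' := by simp [splitDist, hb, hb']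
  simp only [betaIdx, E1, E2, E3, E4, E5, E6]
  exact helper_sep_ge hc

lemma beta_sep_le {e : X → X → ℝ} {A : Set X} {c : ℝ} {a a' b b' : X}
    (ha : a ∈ A) (ha' : a' ∈ A) (hb : b ∉ A) (hb' : b' ∉ A)
    (hcb : c ≤ betaIdx e a a' b b') :
    betaIdx (fun x y => e x y - c * splitDist A x y) a a' b b' ≤ betaIdx e a a' b b' - c := by
  have E1 : e a b - c * splitDist A a b = e a b - c := by simp [splitDist, ha, hb]
  have E2 : e a' b' - c * splitDist A a' b' = e a' b' - c := by simp [splitDist, ha', hb']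
  have E3 : e a' b - c * splitDist A a' b = e a' b - c := by simp [splitDist, ha', hb]
  have E4 : e a b' - c * splitDist A a b' = e a b' - c := by simp [splitDist, ha, hb']
  have E5 : e a a' - c * splitDist A a a' = e a a' := by simp [splitDist, ha, ha']
  have E6 : e b b' - c * splitDist A b b' = e b b' := by simp [splitDist, hb, hb']
  simp only [betaIdx] at hcb
  simp only [betaIdx, E1, E2, E3, E4, E5, E6]
  exact helper_sep_le hcb

lemma beta_nonsep_ge {e : X → X → ℝ} {A : Set X} {c : ℝ} (hc : 0 ≤ c) {a a' b b' : X}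
    (h1 : splitDist A a b + splitDist A a' b' ≤ splitDist A a a' + splitDist A b b')
    (h2 : splitDist A a' b + splitDist A a b' ≤ splitDist A a a' + splitDist A b b') :
    betaIdx e a a' b b' ≤ betaIdx (fun x y => e x y - c * splitDist A x y) a a' b b' := by
  have g1 := mul_le_mul_of_nonneg_left h1 hc
  have g2 := mul_le_mul_of_nonneg_left h2 hc
  have g3 : 0 ≤ c * (splitDist A a a' + splitDist A b b') :=
    mul_nonneg hc (add_nonneg (splitDist_nonneg A a a') (splitDist_nonneg A b b'))
  simp only [betaIdx]
  exact helper_gen (by nlinarith) (by nlinarith) (by nlinarith)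

lemma splitDist_sum_le (A : Set X) (a a' b b' : X)
    (h : ¬(a ∈ A ∧ a' ∈ A ∧ b ∉ A ∧ b' ∉ A)) (h' : ¬(a ∉ A ∧ a' ∉ A ∧ b ∈ A ∧ b' ∈ A)) :
    splitDist A a b + splitDist A a' b' ≤ splitDist A a a' + splitDist A b b' := by
  by_cases h1 : a ∈ A <;> by_cases h2 : a' ∈ A <;> by_cases h3 : b ∈ A <;> by_cases h4 : b' ∈ A <;>
    simp [splitDist, h1, h2, h3, h4]
  · exact absurd ⟨h1, h2, h3, h4⟩ h
  · exact absurd ⟨h1, h2, h3, h4⟩ h'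

lemma keyApp [Finite X] {e : X → X → ℝ} (he : IsPseudometric e) {A B P Q : Set X}
    {a a' b b' x : X}
    (haA : a ∈ A) (ha'A : a' ∈ A) (hbB : b ∈ B) (hb'B : b' ∈ B)
    (haP : a ∈ P) (ha'P : a' ∈ P) (hbQ : b ∈ Q) (hb'Q : b' ∈ Q)
    (hx : (x ∈ B ∧ x ∈ P) ∨ (x ∈ A ∧ x ∈ Q)) :
    isolIdx e A B + isolIdx e P Q ≤ betaIdx e a a' b b' := by
  rcases hx with ⟨hxB, hxP⟩ | ⟨hxA, hxQ⟩
  · exact key5 he a a' b b' x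
      (isolIdx_le e haA ha'A hbB hxB) (isolIdx_le e haA ha'A hb'B hxB)
      (isolIdx_le e haP hxP hbQ hb'Q) (isolIdx_le e ha'P hxP hbQ hb'Q)
      (isolIdx_le e haA ha'A hbB hb'B) (isolIdx_le e haP ha'P hbQ hb'Q)
  · have := key5 he a a' b b' x
      (isolIdx_le e haP ha'P hbQ hxQ) (isolIdx_le e haP ha'P hb'Q hxQ)
      (isolIdx_le e haA hxA hbB hb'B) (isolIdx_le e ha'A hxA hbB hb'B)
      (isolIdx_le e haP ha'P hbQ hb'Q) (isolIdx_le e haA ha'A hbB hb'B)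
    linarith

lemma main_ind [Finite X] (d : X → X → ℝ) (A₀ B₀ : Set X)
    (hA₀ : A₀.Nonempty) (hB₀ : B₀.Nonempty) (s : Finset (Set X)) :
    ∀ (e : X → X → ℝ), IsPseudometric e →
      (∀ A ∈ s, IsSplit A Aᶜ ∧ A₀ ⊆ A ∧ B₀ ⊆ Aᶜ ∧ 0 < isolIdx d A Aᶜ ∧
        isolIdx d A Aᶜ ≤ isolIdx e A Aᶜ) →
      ∑ A ∈ s, isolIdx d A Aᶜ ≤ isolIdx e A₀ B₀ := by
  classical
  induction s using Finset.induction_on with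
  | empty =>
    intro e he _
    simpa using isolIdx_nonneg e hA₀ hB₀
  | insert A s hAs ih =>
    intro e he hcond
    obtain ⟨hAsplit, hA₀A, hB₀A, hdpos, hde⟩ := hcond A (Finset.mem_insert_self A s)
    set c := isolIdx d A Aᶜ with hc_def
    have hc0 : (0:ℝ) ≤ c := le_of_lt hdpos
    set e' := fun x y => e x y - c * splitDist A x y with he'_def
    have he' : IsPseudometric e' := pseudo_sub he hde
    obtain ⟨h0e, hsyme, htrie⟩ := he
    have hcond' : ∀ P ∈ s, IsSplit P Pᶜ ∧ A₀ ⊆ P ∧ B₀ ⊆ Pᶜ ∧ 0 < isolIdx d P Pᶜ ∧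
        isolIdx d P Pᶜ ≤ isolIdx e' P Pᶜ := by
      intro P hPs
      obtain ⟨hPsplit, hA₀P, hB₀P, hdposP, hdeP⟩ := hcond P (Finset.mem_insert_of_mem hPs)
      have hPne : P.Nonempty := hPsplit.1.1
      have hPcne : Pᶜ.Nonempty := hPsplit.1.2.1
      have hAP : A ≠ P := fun hEq => hAs (hEq ▸ hPs)
      have hxex : ∃ x, (x ∈ A ∧ x ∉ P) ∨ (x ∉ A ∧ x ∈ P) := by
        by_contra hco
        push_neg at hco
        apply hAP
        ext z
        have := hco z
        tauto
      obtain ⟨x, hxd⟩ := hxex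
      obtain ⟨x₀, hx₀⟩ := hA₀
      have hx₀A : x₀ ∈ A := hA₀A hx₀
      have hx₀P : x₀ ∈ P := hA₀P hx₀
      refine ⟨hPsplit, hA₀P, hB₀P, hdposP, ?_⟩
      refine le_isolIdx e' hPne hPcne ?_
      intro u hu u' hu' v hv v' hv'
      by_cases hsep1 : u ∈ A ∧ u' ∈ A ∧ v ∉ A ∧ v' ∉ A
      · obtain ⟨m1, m2, m3, m4⟩ := hsep1
        have hkey : isolIdx e A Aᶜ + isolIdx e P Pᶜ ≤ betaIdx e u u' v v' := by
          refine keyApp ⟨h0e, hsyme, htrie⟩ m1 m2 m3 m4 hu hu' hv hv' (x := x) ?_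
          rcases hxd with ⟨h1, h2⟩ | ⟨h1, h2⟩
          · exact Or.inr ⟨h1, h2⟩
          · exact Or.inl ⟨h1, h2⟩
        have hge := beta_sep_ge (e := e) hc0 m1 m2 m3 m4
        have hd1 : isolIdx d P Pᶜ ≤ isolIdx e P Pᶜ := hdeP
        calc isolIdx d P Pᶜ ≤ betaIdx e u u' v v' - c := by linarith
        _ ≤ betaIdx e' u u' v v' := hge
      · by_cases hsep2 : u ∉ A ∧ u' ∉ A ∧ v ∈ A ∧ v' ∈ A
        · obtain ⟨m1, m2, m3, m4⟩ := hsep2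
          have hkey : isolIdx e Aᶜ A + isolIdx e P Pᶜ ≤ betaIdx e u u' v v' :=
            keyApp ⟨h0e, hsyme, htrie⟩ m1 m2 m3 m4 hu hu' hv hv' (x := x₀)
              (Or.inl ⟨hx₀A, hx₀P⟩)
          rw [isolIdx_comm hsyme Aᶜ A] at hkey
          have hge := beta_sep_ge (e := e) hc0 m3 m4 m1 m2
          have hswap : betaIdx e' v v' u u' = betaIdx e' u u' v v' :=
            betaIdx_swap he'.2.1 u u' v v'
          have hswapE : betaIdx e v v' u u' = betaIdx e u u' v v' :=
            betaIdx_swap hsyme u u' v v'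
          rw [← hswap]
          rw [← hswapE] at hkey
          calc isolIdx d P Pᶜ ≤ betaIdx e v v' u u' - c := by linarith
          _ ≤ betaIdx e' v v' u u' := hge
        · have h1 := splitDist_sum_le A u u' v v' hsep1 hsep2
          have h2 : splitDist A u' v + splitDist A u v' ≤
              splitDist A u u' + splitDist A v v' := by
            have h2' := splitDist_sum_le A u' u v v' (by tauto) (by tauto)
            have hcquv : splitDist A u' u = splitDist A u u' := by
              by_cases hq1 : u ∈ A <;> by_cases hq2 : u' ∈ A <;> simp [splitDist, hq1, hq2]
            rw [hcquv] at h2'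
            linarith [h2']
          calc isolIdx d P Pᶜ ≤ isolIdx e P Pᶜ := hdeP
          _ ≤ betaIdx e u u' v v' := isolIdx_le e hu hu' hv hv'
          _ ≤ betaIdx e' u u' v v' := beta_nonsep_ge hc0 h1 h2
    have hIH := ih e' he' hcond'
    obtain ⟨a, ha, a', ha', b, hb, b', hb', heq⟩ := exists_isolIdx_eq e hA₀ hB₀
    have hbA : b ∉ A := fun hbA => (hB₀A hb) hbA
    have hb'A : b' ∉ A := fun h => (hB₀A hb') h
    have hcb : c ≤ betaIdx e a a' b b' :=
      le_trans hde (isolIdx_le e (hA₀A ha) (hA₀A ha') (hB₀A hb) (hB₀A hb'))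
    have hle1 : betaIdx e' a a' b b' ≤ betaIdx e a a' b b' - c :=
      beta_sep_le (hA₀A ha) (hA₀A ha') hbA hb'A hcb
    have hle2 : isolIdx e' A₀ B₀ ≤ betaIdx e' a a' b b' := isolIdx_le e' ha ha' hb hb'
    rw [Finset.sum_insert hAs]
    have : isolIdx e' A₀ B₀ ≤ isolIdx e A₀ B₀ - c := by rw [heq]; linarith
    linarith

theorem statement2 [Finite X] (d : X → X → ℝ) (hd : IsPseudometric d)
    (A₀ B₀ : Set X) (hps : IsPartialSplit A₀ B₀) (hpos : 0 < isolIdx d A₀ B₀) :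
    ∑ᶠ A ∈ {A : Set X | IsDSplit d A Aᶜ ∧ A₀ ⊆ A ∧ B₀ ⊆ Aᶜ}, isolIdx d A Aᶜ
      ≤ isolIdx d A₀ B₀ := by
  classical
  have hfin : {A : Set X | IsDSplit d A Aᶜ ∧ A₀ ⊆ A ∧ B₀ ⊆ Aᶜ}.Finite := Set.toFinite _
  rw [← Set.Finite.coe_toFinset hfin, finsum_mem_coe_finset]
  refine main_ind d A₀ B₀ hps.1 hps.2.1 hfin.toFinset d hd ?_
  intro A hA
  rw [Set.Finite.mem_toFinset] at hA
  obtain ⟨⟨hsp, hpos'⟩, h1, h2⟩ := hA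
  exact ⟨hsp, h1, h2, hpos', le_refl _⟩
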